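/- With c_k = (λ^{k+1} − μ^{k+1})/√13 and d_k = [((7−√13)/2)λ^{k+1} − ((7+√13)/2)μ^{k+1}]/√13, where λ = (3+√13)/2 and μ = (3−√13)/2, we have 9c_k² − 7c_k d_k + d_k² = (−1)^{k+1} for all k ≥ 0. -/

import Mathlib

noncomputable def lamE : ℝ := (3 + Real.sqrt 13) / 2
noncomputable def muE : ℝ := (3 - Real.sqrt 13) / 2

noncomputable def cseq (k : ℕ) : ℝ := (lamE ^ (k + 1) - muE ^ (k + 1)) / Real.sqrt 13

noncomputable def dseq (k : ℕ) : ℝ :=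
  ((7 - Real.sqrt 13) / 2 * lamE ^ (k + 1) - (7 + Real.sqrt 13) / 2 * muE ^ (k + 1)) /
    Real.sqrt 13

theorem c_d_identity (k : ℕ) :
    9 * cseq k ^ 2 - 7 * cseq k * dseq k + dseq k ^ 2 = (-1 : ℝ) ^ (k + 1) := by
  have hs : Real.sqrt 13 ^ 2 = 13 := Real.sq_sqrt (by norm_num)
  have hs0 : Real.sqrt 13 ≠ 0 := by positivity
  have hlm : lamE * muE = -1 := by
    unfold lamE muE; nlinarith [hs]
  have hab : lamE ^ (k + 1) * muE ^ (k + 1) = (-1 : ℝ) ^ (k + 1) := by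
    rw [← mul_pow, hlm]
  rw [← hab]
  unfold cseq dseq
  set a := lamE ^ (k + 1)
  set b := muE ^ (k + 1)
  set s := Real.sqrt 13
  field_simp
  linear_combination ((a - b) ^ 2) * hs
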